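/- arXiv:1302.2007 — 2 statements merged into one kernel-verified Lean document; each statement's English description precedes it below -/
import Mathlib

section
/- If two hermitian linear functionals u and v on the space of Laurent polynomials satisfy u·L = v·M for some nonzero Laurent polynomials L and M (where (u·L)[f] := u[L·f]), then their Carathéodory formal series F and G satisfy F·L = G·M + C for some Laurent polynomial C. In fact C = F·L − G·M = G_*·M − F_*·L lies in Λ_{p,q} whenever L, M ∈ Λ_{p,q}. -/
open LaurentPolynomial Complex Polynomial

noncomputable section

abbrev LP := LaurentPolynomial ℂ
abbrev Func := LP →ₗ[ℂ] ℂ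

/-- The coefficients of a Laurent polynomial, as a finitely supported function on `ℤ`. -/
def coeF (L : LP) : ℤ →₀ ℂ := L.coeff

/-- The modified functional `u·L`, defined by `(u·L)[f] = u[L·f]`. -/
def smulF (u : Func) (L : LP) : Func := u ∘ₗ LinearMap.mulLeft ℂ L

/-- The moments `μ_n = u[zⁿ]`. -/
def moment (u : Func) (n : ℤ) : ℂ := u (T n)

/-- A functional is hermitian if `μ_{-n} = conj μ_n`. -/
def IsHermitian (u : Func) : Prop := ∀ n : ℤ, moment u (-n) = (starRingEnd ℂ) (moment u n)

/-- The Carathéodory formal series `F(z) = μ₀ + 2 Σ_{n≥1} μ_{-n} zⁿ`, as coefficients. -/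
def CS (u : Func) : ℤ → ℂ := fun n => if n = 0 then moment u 0 else if 0 < n then 2 * moment u (-n) else 0

/-- The Laurent formal series `L[u](z) = Σ_{n∈ℤ} μ_{-n} zⁿ`, as coefficients. -/
def LS (u : Func) : ℤ → ℂ := fun n => moment u (-n)

/-- `H_*(z) = conj (H (1/conj z))`, coefficient-wise. -/
def starS (H : ℤ → ℂ) : ℤ → ℂ := fun n => (starRingEnd ℂ) (H (-n))

/-- Product of a formal doubly-infinite series with a Laurent polynomial. -/
def mulS (H : ℤ → ℂ) (L : LP) : ℤ → ℂ := fun n => (coeF L).sum fun k c => c * H (n - k)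

/-- The `*` operation on Laurent polynomials: `L_*(z) = conj (L (1/conj z))`. -/
def starLP (L : LP) : LP := AddMonoidAlgebra.ofCoeff
  (Finsupp.equivMapDomain (Equiv.neg ℤ)
    (Finsupp.mapRange (starRingEnd ℂ) (map_zero _) (coeF L)) : ℤ →₀ ℂ)

/-- A Laurent polynomial as a formal series. -/
def polyS (N : LP) : ℤ → ℂ := fun n => coeF N n

/-- The Lebesgue functional `leb[zⁿ] = δ_{n,0}`. -/
def lebF : Func := (Finsupp.lapply (0 : ℤ) : (ℤ →₀ ℂ) →ₗ[ℂ] ℂ) ∘ₗ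
  (AddMonoidAlgebra.coeffLinearEquiv ℂ : LP ≃ₗ[ℂ] (ℤ →₀ ℂ)).toLinearMap

/-- The Dirac delta at `z = 1`: evaluation at `1`. -/
def delta1 : Func := (Finsupp.lsum ℂ (fun _ : ℤ => (LinearMap.id : ℂ →ₗ[ℂ] ℂ)) : (ℤ →₀ ℂ) →ₗ[ℂ] ℂ) ∘ₗ
  (AddMonoidAlgebra.coeffLinearEquiv ℂ : LP ≃ₗ[ℂ] (ℤ →₀ ℂ)).toLinearMap

/-- `P* (z) = z^q conj(P(1/conj z))` with `q` given: conjugate coefficients and reflect at `q`. -/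
def starDeg (q : ℕ) (P : Polynomial ℂ) : Polynomial ℂ := Polynomial.reflect q (P.map (starRingEnd ℂ))

/-- The class `Δ` of hermitian functionals annihilated by a nonzero Laurent polynomial. -/
def InDelta (u : Func) : Prop := IsHermitian u ∧ ∃ N : LP, N ≠ 0 ∧ smulF u N = 0

lemma w_single (w : Func) (m : ℤ) (c : ℂ) :
    w (AddMonoidAlgebra.single m c : LP) = c * moment w m := by
  have h : (AddMonoidAlgebra.single m c : LP) = c • T m := by
    show _ = c • (AddMonoidAlgebra.single m (1:ℂ) : LP)
    rw [show (c • (AddMonoidAlgebra.single m (1:ℂ) : LP)) = AddMonoidAlgebra.single m (c * 1) from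
      AddMonoidAlgebra.smul_single' c m 1, mul_one]
  rw [h, map_smul, moment]
  rfl

lemma momA (w : Func) (L : LP) (n : ℤ) :
    w (L * T (-n)) = (coeF L).sum fun k c => c * moment w (k - n) := by
  have hL : L = (coeF L).sum fun k c => (AddMonoidAlgebra.single k c : LP) :=
    (AddMonoidAlgebra.sum_coeff_single L).symm
  have hphi : ∀ x : LP, w (x * T (-n)) = (w ∘ₗ LinearMap.mulRight ℂ (T (-n))) x :=
    fun x => rfl
  rw [hphi]
  conv_lhs => rw [hL]
  rw [map_finsuppSum]
  refine Finsupp.sum_congr fun k hk => ?_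
  rw [← hphi (AddMonoidAlgebra.single k ((coeF L) k))]
  rw [single_eq_C_mul_T, mul_assoc, ← LaurentPolynomial.T_sub, ← single_eq_C_mul_T,
    w_single]

lemma LS_mul (w : Func) (L : LP) (n : ℤ) : mulS (LS w) L n = w (L * T (-n)) := by
  rw [momA]
  simp only [mulS, LS, neg_sub]

lemma CS_add_star (w : Func) (hw : IsHermitian w) (n : ℤ) :
    CS w n + starS (CS w) n = 2 * LS w n := by
  rcases lt_trichotomy n 0 with h | h | h
  · have h0 : ¬ n = 0 := by omega
    have h1 : ¬ 0 < n := by omega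
    have h2 : ¬ (-n) = 0 := by omega
    have h3 : 0 < -n := by omega
    simp only [CS, starS, LS, h0, h1, h2, h3, if_false, if_true, if_pos, if_neg, neg_neg]
    rw [map_mul, ← hw n, Complex.conj_ofNat]
    ring
  · subst h
    have h0 := hw 0
    rw [neg_zero] at h0
    simp only [CS, starS, LS, neg_zero]
    norm_num
    rw [← h0]
    ring
  · have h0 : ¬ n = 0 := by omega
    have h2 : ¬ (-n) = 0 := by omega
    have h3 : ¬ 0 < -n := by omega
    simp only [CS, starS, LS, h0, h, h2, h3, if_false, if_true, if_pos, if_neg, neg_neg]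
    simp

lemma mulS_CS_star (w : Func) (hw : IsHermitian w) (L : LP) (n : ℤ) :
    mulS (CS w) L n + mulS (starS (CS w)) L n = 2 * mulS (LS w) L n := by
  simp only [mulS, Finsupp.sum]
  rw [← Finset.sum_add_distrib, Finset.mul_sum]
  refine Finset.sum_congr rfl fun k _ => ?_
  rw [← mul_add, CS_add_star w hw]
  ring

lemma mulS_CS_zero (w : Func) (L : LP) {p : ℤ} (h : ∀ k, coeF L k ≠ 0 → p ≤ k)
    {n : ℤ} (hn : n < p) : mulS (CS w) L n = 0 := by
  simp only [mulS, Finsupp.sum]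
  refine Finset.sum_eq_zero fun k hk => ?_
  have hk' : coeF L k ≠ 0 := Finsupp.mem_support_iff.mp hk
  have h1 : ¬ (n - k) = 0 := by have := h k hk'; omega
  have h2 : ¬ 0 < n - k := by have := h k hk'; omega
  simp [CS, h1, h2]
  intro h3; have := h k hk'; omega

lemma mulS_star_zero (w : Func) (L : LP) {q : ℤ} (h : ∀ k, coeF L k ≠ 0 → k ≤ q)
    {n : ℤ} (hn : q < n) : mulS (starS (CS w)) L n = 0 := by
  simp only [mulS, Finsupp.sum]
  refine Finset.sum_eq_zero fun k hk => ?_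
  have hk' : coeF L k ≠ 0 := Finsupp.mem_support_iff.mp hk
  have h1 : ¬ (k - n) = 0 := by have := h k hk'; omega
  have h2 : ¬ n < k := by have := h k hk'; omega
  simp [starS, CS, h1, h2]

/-- a rational modification `u·L = v·M` induces a linear spectral
transformation `F·L = G·M + C`, with `C = F·L - G·M = G_*·M - F_*·L ∈ Λ_{p,q}`
whenever `L, M ∈ Λ_{p,q}`. -/
theorem stmt0 (u v : Func) (hu : IsHermitian u) (hv : IsHermitian v)
    (L M : LP) (hL : L ≠ 0) (hM : M ≠ 0) (p q : ℤ)
    (hLpq : ∀ k, coeF L k ≠ 0 → p ≤ k ∧ k ≤ q)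
    (hMpq : ∀ k, coeF M k ≠ 0 → p ≤ k ∧ k ≤ q)
    (hRM : smulF u L = smulF v M) :
    ∃ C : LP,
      (∀ k, coeF C k ≠ 0 → p ≤ k ∧ k ≤ q) ∧
      mulS (CS u) L = (fun n => mulS (CS v) M n + coeF C n) ∧
      polyS C = (fun n => mulS (CS u) L n - mulS (CS v) M n) ∧
      polyS C = (fun n => mulS (starS (CS v)) M n - mulS (starS (CS u)) L n) := by
  set D : ℤ → ℂ := fun n => mulS (CS u) L n - mulS (CS v) M n with hD
  have key : ∀ n, mulS (CS u) L n - mulS (CS v) M n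
      = mulS (starS (CS v)) M n - mulS (starS (CS u)) L n := by
    intro n
    have h1 := mulS_CS_star u hu L n
    have h2 := mulS_CS_star v hv M n
    have h3 : mulS (LS u) L n = mulS (LS v) M n := by
      rw [LS_mul, LS_mul]
      have := congrArg (fun w : Func => w (T (-n))) hRM
      simpa [smulF] using this
    linear_combination h1 - h2 + 2 * h3
  have hsup : ∀ n, D n ≠ 0 → p ≤ n ∧ n ≤ q := by
    intro n hn
    by_contra hc
    push_neg at hc
    apply hn
    rcases lt_or_ge n p with h | h
    · simp only [hD]
      rw [mulS_CS_zero u L (fun k hk => (hLpq k hk).1) h,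
        mulS_CS_zero v M (fun k hk => (hMpq k hk).1) h, sub_zero]
    · have hq : q < n := hc h
      simp only [hD]
      rw [key n, mulS_star_zero v M (fun k hk => (hMpq k hk).2) hq,
        mulS_star_zero u L (fun k hk => (hLpq k hk).2) hq, sub_zero]
  refine ⟨AddMonoidAlgebra.ofCoeff (Finsupp.onFinset (Finset.Icc p q) D
      (fun n hn => Finset.mem_Icc.2 (hsup n hn)) : ℤ →₀ ℂ), ?_, ?_, ?_, ?_⟩
  · intro k hk
    exact hsup k hk
  · funext n
    show mulS (CS u) L n = mulS (CS v) M n + (mulS (CS u) L n - mulS (CS v) M n)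
    ring
  · funext n
    rfl
  · funext n
    exact key n
end
end

section
/- If u is a hermitian functional with u·Q = 0 for a nonzero polynomial Q with Q(0) ≠ 0, then the minimal such polynomial Q (monic up to a unit, dividing every polynomial Q₁ with u·Q₁ = 0) can be chosen to satisfy Q = Q*, where Q*(z) = z^{deg Q}·conj(Q(1/conj z)). -/
open LaurentPolynomial Complex Polynomial

noncomputable section

-- casting helper
def ofF (f : ℤ →₀ ℂ) : LP := AddMonoidAlgebra.ofCoeff f

lemma smulF_apply (u : Func) (N f : LP) : smulF u N f = u (N * f) := rfl

lemma smulF_mul (u : Func) (M N : LP) :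
    smulF u (M * N) = (smulF u N).comp (LinearMap.mulLeft ℂ M) := by
  apply LinearMap.ext; intro f
  simp only [smulF, LinearMap.comp_apply, LinearMap.mulLeft_apply]
  congr 1
  ring

lemma smulF_add (u : Func) (M N : LP) :
    smulF u (M + N) = smulF u M + smulF u N := by
  apply LinearMap.ext; intro f
  simp [smulF, add_mul]

lemma single_eq_smul_T (a : ℤ) (b : ℂ) : ofF (Finsupp.single a b) = b • T a := by
  show AddMonoidAlgebra.ofCoeff (Finsupp.single a b : ℤ →₀ ℂ)
    = b • AddMonoidAlgebra.ofCoeff (Finsupp.single a 1 : ℤ →₀ ℂ)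
  rw [← AddMonoidAlgebra.ofCoeff_smul, Finsupp.smul_single', mul_one]

lemma apply_eq_sum (u : Func) (N : LP) (k : ℤ) :
    u (N * T k) = (coeF N).sum fun j c => c * u (T (j + k)) := by
  have hN : N = (coeF N).sum fun j c => ofF (Finsupp.single j c) :=
    (AddMonoidAlgebra.sum_coeff_single N).symm
  conv_lhs => rw [hN]
  rw [Finsupp.sum_mul, map_finsuppSum]
  apply Finsupp.sum_congr
  intro j _
  rw [single_eq_smul_T, smul_mul_assoc, ← T_add, map_smul, smul_eq_mul]

lemma smulF_eq_zero_iff (u : Func) (N : LP) :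
    smulF u N = 0 ↔ ∀ k : ℤ, u (N * T k) = 0 := by
  constructor
  · intro h k
    simpa [smulF_apply] using LinearMap.congr_fun h (T k)
  · intro h
    apply LinearMap.ext
    intro f
    induction f using AddMonoidAlgebra.induction_linear with
    | zero => simp
    | add f g hf hg => simp [hf, hg]
    | single a b =>
    show smulF u N (ofF (Finsupp.single a b)) = 0
    rw [single_eq_smul_T, smulF_apply, mul_smul_comm, map_smul, h a, smul_zero]

lemma starLP_coeff (L : LP) (n : ℤ) :
    coeF (starLP L) n = (starRingEnd ℂ) (coeF L (-n)) := by
  show (Finsupp.equivMapDomain (Equiv.neg ℤ)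
    (Finsupp.mapRange (starRingEnd ℂ) (map_zero _) (coeF L)) : ℤ →₀ ℂ) n = _
  rw [Finsupp.equivMapDomain_apply, Finsupp.mapRange_apply]
  congr 1

lemma herm_star (u : Func) (hu : IsHermitian u) (N : LP) (h : smulF u N = 0) :
    smulF u (starLP N) = 0 := by
  rw [smulF_eq_zero_iff] at h ⊢
  intro k
  rw [apply_eq_sum]
  have hrw : coeF (starLP N) = Finsupp.equivMapDomain (Equiv.neg ℤ)
      (Finsupp.mapRange (starRingEnd ℂ) (map_zero _) (coeF N)) := rfl
  rw [hrw, Finsupp.sum_equivMapDomain, Finsupp.sum_mapRange_index (by simp)]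
  have hk := h (-k)
  rw [apply_eq_sum] at hk
  have hc := congrArg (starRingEnd ℂ) hk
  rw [map_zero, map_finsuppSum] at hc
  rw [← hc]
  apply Finsupp.sum_congr
  intro j _
  simp only [map_mul, Equiv.neg_apply]
  congr 1
  have h2 := hu (j + -k)
  simp only [moment] at h2
  rw [show -(j + -k) = -j + k by ring] at h2
  exact h2

lemma starLP_C_mul_T (b : ℂ) (a : ℤ) :
    starLP (LaurentPolynomial.C b * T a) = LaurentPolynomial.C ((starRingEnd ℂ) b) * T (-a) := by
  rw [← single_eq_C_mul_T, ← single_eq_C_mul_T]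
  show AddMonoidAlgebra.ofCoeff (Finsupp.equivMapDomain (Equiv.neg ℤ)
    (Finsupp.mapRange (starRingEnd ℂ) (map_zero _) (Finsupp.single a b)) : ℤ →₀ ℂ)
    = AddMonoidAlgebra.ofCoeff (Finsupp.single (-a) ((starRingEnd ℂ) b) : ℤ →₀ ℂ)
  rw [Finsupp.mapRange_single, Finsupp.equivMapDomain_single]
  rfl

def starLPHom : LP →+ LP where
  toFun := starLP
  map_zero' := by
    apply LaurentPolynomial.ext
    intro n
    rw [show (starLP 0 : LP).coeff n = coeF (starLP 0) n from rfl, starLP_coeff]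
    simp [coeF]
  map_add' M N := by
    apply LaurentPolynomial.ext
    intro n
    show coeF (starLP (M + N)) n = coeF (starLP M + starLP N) n
    rw [starLP_coeff]
    have : coeF (starLP M + starLP N) n = coeF (starLP M) n + coeF (starLP N) n := rfl
    rw [this, starLP_coeff, starLP_coeff]
    have h2 : coeF (M + N) (-n) = coeF M (-n) + coeF N (-n) := rfl
    rw [h2, map_add]

def starDegHom (q : ℕ) : Polynomial ℂ →+ Polynomial ℂ where
  toFun := starDeg q
  map_zero' := by simp [starDeg]
  map_add' P R := by simp [starDeg, Polynomial.map_add, Polynomial.reflect_add]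

lemma toLaurent_starDeg (q : ℕ) (P : Polynomial ℂ) (h : P.natDegree ≤ q) :
    Polynomial.toLaurent (starDeg q P) = T q * starLP (Polynomial.toLaurent P) := by
  conv_lhs => rw [P.as_sum_range' (q+1) (Nat.lt_succ_of_le h)]
  conv_rhs => rw [P.as_sum_range' (q+1) (Nat.lt_succ_of_le h)]
  rw [show starDeg q = starDegHom q from rfl, show starLP = starLPHom from rfl]
  rw [map_sum, map_sum, map_sum, map_sum, Finset.mul_sum]
  apply Finset.sum_congr rfl
  intro i hi
  have hi' : i ≤ q := Nat.lt_succ_iff.mp (Finset.mem_range.mp hi)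
  show Polynomial.toLaurent (starDeg q (Polynomial.monomial i (P.coeff i)))
    = T q * starLP (Polynomial.toLaurent (Polynomial.monomial i (P.coeff i)))
  rw [← Polynomial.C_mul_X_pow_eq_monomial]
  have h1 : starDeg q (Polynomial.C (P.coeff i) * Polynomial.X ^ i)
      = Polynomial.C ((starRingEnd ℂ) (P.coeff i)) * Polynomial.X ^ (q - i) := by
    rw [starDeg, Polynomial.map_mul, Polynomial.map_C, Polynomial.map_pow, Polynomial.map_X,
      Polynomial.reflect_C_mul, Polynomial.reflect_monomial, Polynomial.revAt_le hi']
  rw [h1, Polynomial.toLaurent_C_mul_X_pow, Polynomial.toLaurent_C_mul_X_pow,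
    starLP_C_mul_T]
  rw [show ((q - i : ℕ) : ℤ) = (q : ℤ) + -(i : ℤ) by omega, T_add]
  ring

lemma reflect_reflect (N : ℕ) (p : Polynomial ℂ) :
    Polynomial.reflect N (Polynomial.reflect N p) = p :=
  Polynomial.ext fun i => by
    rw [Polynomial.coeff_reflect, Polynomial.coeff_reflect, Polynomial.revAt_invol]

lemma starDeg_starDeg (q : ℕ) (P : Polynomial ℂ) : starDeg q (starDeg q P) = P := by
  rw [starDeg, starDeg, ← Polynomial.reflect_map, reflect_reflect, Polynomial.map_map]
  rw [show (starRingEnd ℂ).comp (starRingEnd ℂ) = RingHom.id ℂ from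
    RingHom.ext fun x => Complex.conj_conj x]
  exact Polynomial.map_id

lemma starDeg_C_mul (q : ℕ) (a : ℂ) (P : Polynomial ℂ) :
    starDeg q (Polynomial.C a * P)
      = Polynomial.C ((starRingEnd ℂ) a) * starDeg q P := by
  rw [starDeg, Polynomial.map_mul, Polynomial.map_C, Polynomial.reflect_C_mul, starDeg]

def annIdeal (u : Func) : Ideal (Polynomial ℂ) where
  carrier := {P | smulF u (Polynomial.toLaurent P) = 0}
  add_mem' {a b} ha hb := by
    simp only [Set.mem_setOf_eq] at *
    rw [map_add, smulF_add, ha, hb, add_zero]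
  zero_mem' := by
    simp only [Set.mem_setOf_eq, map_zero]
    apply LinearMap.ext; intro f; simp [smulF]
  smul_mem' r P hP := by
    simp only [Set.mem_setOf_eq, smul_eq_mul, map_mul] at *
    rw [smulF_mul, hP, LinearMap.zero_comp]


set_option maxHeartbeats 1000000 in
/-- if a hermitian `u` is annihilated by a nonzero polynomial with
nonzero constant term, then a minimal annihilating polynomial can be chosen
self-reciprocal: `Q = Q*` where `Q*(z) = z^(deg Q)·conj(Q(1/conj z))`. -/
theorem stmt4 (u : Func) (hu : IsHermitian u)
    (Q₀ : Polynomial ℂ) (hQ₀ : Q₀ ≠ 0) (h0 : Q₀.coeff 0 ≠ 0)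
    (hann : smulF u (Polynomial.toLaurent Q₀) = 0) :
    ∃ Q : Polynomial ℂ, Q ≠ 0 ∧ smulF u (Polynomial.toLaurent Q) = 0 ∧
      (∀ Q₁ : Polynomial ℂ, smulF u (Polynomial.toLaurent Q₁) = 0 → Q ∣ Q₁) ∧
      starDeg Q.natDegree Q = Q := by
  classical
  set J := annIdeal u with hJ
  obtain ⟨g, hspan⟩ : ∃ g : Polynomial ℂ, J = Ideal.span {g} :=
    ⟨Submodule.IsPrincipal.generator J, (Ideal.span_singleton_generator J).symm⟩
  have hgmem : g ∈ J := hspan ▸ Ideal.mem_span_singleton_self g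
  have hgann : smulF u (Polynomial.toLaurent g) = 0 := hgmem
  have hdvd : ∀ Q₁ : Polynomial ℂ, smulF u (Polynomial.toLaurent Q₁) = 0 → g ∣ Q₁ := by
    intro Q₁ h1
    have hmem : Q₁ ∈ J := h1
    rw [hspan, Ideal.mem_span_singleton] at hmem
    exact hmem
  have hg0 : g ≠ 0 := by
    intro hg
    obtain ⟨t, ht⟩ := hdvd Q₀ hann
    rw [ht, hg, zero_mul] at hQ₀
    exact hQ₀ rfl
  set q := g.natDegree with hq
  have hstar_ann : smulF u (Polynomial.toLaurent (starDeg q g)) = 0 := by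
    rw [toLaurent_starDeg q g le_rfl, smulF_mul,
      herm_star u hu _ hgann, LinearMap.zero_comp]
  have hstar_ne : starDeg q g ≠ 0 := by
    rw [starDeg, Ne, Polynomial.reflect_eq_zero_iff,
      Polynomial.map_eq_zero_iff (RingHom.injective _)]
    exact hg0
  have hmapdeg : (g.map (starRingEnd ℂ)).natDegree = q :=
    Polynomial.natDegree_map_eq_of_injective (RingHom.injective _) g
  have hstar_deg : (starDeg q g).natDegree ≤ q := by
    rw [Polynomial.natDegree_le_iff_coeff_eq_zero]
    intro m hm
    rw [starDeg, Polynomial.coeff_reflect, Polynomial.revAt_eq_self_of_lt hm]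
    apply Polynomial.coeff_eq_zero_of_natDegree_lt
    rw [hmapdeg]; exact hm
  obtain ⟨t, ht⟩ := hdvd (starDeg q g) hstar_ann
  have ht0 : t ≠ 0 := by
    intro h; rw [h, mul_zero] at ht; exact hstar_ne ht
  have htdeg : t.natDegree = 0 := by
    have h2 := Polynomial.natDegree_mul hg0 ht0
    rw [← ht] at h2
    omega
  set c := t.coeff 0 with hc
  have htc : t = Polynomial.C c := Polynomial.eq_C_of_natDegree_eq_zero htdeg
  have hc0 : c ≠ 0 := by
    intro h; rw [htc, h, map_zero] at ht0; exact ht0 rfl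
  have hstar_eq : starDeg q g = Polynomial.C c * g := by
    rw [ht, htc]; ring
  have hcc : (starRingEnd ℂ) c * c = 1 := by
    have h2 : Polynomial.C ((starRingEnd ℂ) c * c) * g = g := by
      conv_rhs => rw [← starDeg_starDeg q g, hstar_eq, starDeg_C_mul, hstar_eq]
      rw [map_mul, mul_assoc]
    have h3 : Polynomial.C ((starRingEnd ℂ) c * c) * g = Polynomial.C 1 * g := by
      rw [h2, Polynomial.C_1, one_mul]
    exact Polynomial.C_injective (mul_right_cancel₀ hg0 h3)
  have hnc : Complex.normSq c = 1 := by
    have h4 : ((Complex.normSq c : ℂ)) = 1 := by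
      rw [← Complex.mul_conj c, mul_comm]
      exact hcc
    exact_mod_cast h4
  set d := Complex.exp (Complex.log c / 2) with hd
  have hd0 : d ≠ 0 := Complex.exp_ne_zero _
  have hd2 : d * d = c := by
    rw [hd, ← Complex.exp_add,
      show Complex.log c / 2 + Complex.log c / 2 = Complex.log c by ring]
    exact Complex.exp_log hc0
  have hnd : Complex.normSq d = 1 := by
    have h1 : Complex.normSq d * Complex.normSq d = 1 := by
      rw [← map_mul, hd2, hnc]
    rcases mul_self_eq_one_iff.mp h1 with h | h
    · exact h
    · have := Complex.normSq_nonneg d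
      linarith
  have hdd : (starRingEnd ℂ) d * d = 1 := by
    rw [mul_comm, Complex.mul_conj, hnd]
    norm_num
  refine ⟨Polynomial.C d * g, ?_, ?_, ?_, ?_⟩
  · exact mul_ne_zero (by simpa using hd0) hg0
  · rw [Polynomial.toLaurent_C_mul_eq, smulF_mul, hgann, LinearMap.zero_comp]
  · intro Q₁ h1
    obtain ⟨t₁, ht₁⟩ := hdvd Q₁ h1
    refine ⟨Polynomial.C d⁻¹ * t₁, ?_⟩
    rw [ht₁, show Polynomial.C d * g * (Polynomial.C d⁻¹ * t₁)
        = (Polynomial.C d * Polynomial.C d⁻¹) * (g * t₁) by ring,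
      ← map_mul, mul_inv_cancel₀ hd0, Polynomial.C_1, one_mul]
  · have hdeg : (Polynomial.C d * g).natDegree = q := Polynomial.natDegree_C_mul hd0
    rw [hdeg, starDeg_C_mul, hstar_eq,
      show Polynomial.C ((starRingEnd ℂ) d) * (Polynomial.C c * g)
        = Polynomial.C ((starRingEnd ℂ) d * c) * g by rw [map_mul, mul_assoc]]
    congr 2
    rw [← hd2, ← mul_assoc, hdd, one_mul]
end
end
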